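/- Let r ∈ [0,π), k ≥ 0, and μ ∈ V_{2k+1}(r). For every ε > 0 there is a neighborhood U of μ in VRm(S¹;r) such that for every ν ∈ U the following holds: if A_0,…,A_{2l} are all the (ν,r)-arcs and, for each i, A'_i is the closed arc obtained from A_i by extending it by (π−r)/2 at each end, then ν(A'_i) = ν(A_i) for each i, the arcs A'_0,…,A'_{2l} are pairwise disjoint, supp(μ) ⊆ ⋃_i A'_i, and |μ(A'_i) − ν(A'_i)| < ε for every i. -/

import Mathlib

open MeasureTheory Metric Filter
open scoped unitInterval

noncomputable section

/-- The circle of circumference `2π`, modeled as `ℝ/2πℤ` with the quotient (geodesic) metric. -/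
abbrev S1 : Type := AddCircle (2 * Real.pi)

instance : Fact (0 < 2 * Real.pi) := ⟨by positivity⟩

/-- The set of atoms of a probability measure. -/
def suppSet {X : Type*} [MeasurableSpace X] (μ : ProbabilityMeasure X) : Set X :=
  {x | μ {x} ≠ 0}

/-- Finitely supported Borel probability measures, topologized as a subspace of the
space of Borel probability measures with the topology of weak convergence. -/
abbrev Pfin (X : Type*) [MeasurableSpace X] : Type _ :=
  {μ : ProbabilityMeasure X // ∃ S : Finset X, μ (↑S : Set X) = 1}

/-- The Vietoris–Rips metric thickening of the circle at scale `r`: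
finitely supported probability measures whose support has diameter at most `r`. -/
def VRm (r : ℝ) : Set (Pfin S1) :=
  {μ | Metric.diam (suppSet μ.1) ≤ r}


/-- A closed arc of the circle: the image of a closed interval `[a,b]` (with
`a ≤ b < a + 2π`, so possibly a single point) under the projection `ℝ → ℝ/2πℤ`. -/
def IsClosedArc (A : Set S1) : Prop :=
  ∃ a b : ℝ, a ≤ b ∧ b < a + 2 * Real.pi ∧ A = (fun t : ℝ => (t : S1)) '' Set.Icc a b

/-- A point `x` is excluded by `Θ` (at scale `r`) if its distance from some point
of `Θ` exceeds `r`. -/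
def ExcludedBy (r : ℝ) (Θ : Set S1) (x : S1) : Prop :=
  ∃ θ ∈ Θ, r < dist θ x

/-- A `(Θ,r)`-arc: a closed arc, maximal among closed arcs that contain at least one
point of `Θ` and contain no point excluded by `Θ`. -/
def IsArc (r : ℝ) (Θ : Set S1) (A : Set S1) : Prop :=
  IsClosedArc A ∧ (A ∩ Θ).Nonempty ∧ (∀ x ∈ A, ¬ ExcludedBy r Θ x) ∧
    ∀ B : Set S1, IsClosedArc B → (B ∩ Θ).Nonempty → (∀ x ∈ B, ¬ ExcludedBy r Θ x) →
      A ⊆ B → A = B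

/-- `arcs_r(Θ)`: the number of `(Θ,r)`-arcs. -/
def arcsCount (r : ℝ) (Θ : Set S1) : ℕ :=
  Set.ncard {A : Set S1 | IsArc r Θ A}

/-- `arcs_r(μ)` for a finitely supported measure: the number of `(supp μ, r)`-arcs. -/
def arcsCountM (r : ℝ) (μ : Pfin S1) : ℕ :=
  arcsCount r (suppSet μ.1)

/-- `V_{2k+1}(r)`: measures in the metric thickening with exactly `2k+1` arcs. -/
def V (r : ℝ) (k : ℕ) : Set (Pfin S1) :=
  {μ ∈ VRm r | arcsCountM r μ = 2 * k + 1}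

/-- `W_{2k+1}(r)`: measures in the metric thickening with at most `2k+1` arcs. -/
def W (r : ℝ) (k : ℕ) : Set (Pfin S1) :=
  {μ ∈ VRm r | arcsCountM r μ ≤ 2 * k + 1}
/-- `A'` is obtained from the closed arc `A` by extending it by `c` at each end. -/
def IsExtensionBy (c : ℝ) (A A' : Set S1) : Prop :=
  ∃ a b : ℝ, a ≤ b ∧ b < a + 2 * Real.pi ∧
    A = (fun t : ℝ => (t : S1)) '' Set.Icc a b ∧
    A' = (fun t : ℝ => (t : S1)) '' Set.Icc (a - c) (b + c)

open scoped NNReal ENNReal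
open Set

lemma S1.coe_sub' (s t : ℝ) : ((s : S1) - (t : S1)) = ((s - t : ℝ) : S1) :=
  (QuotientAddGroup.mk_sub _ s t).symm

lemma dist_coe_le (s t : ℝ) : dist ((s : S1)) ((t : S1)) ≤ |s - t| := by
  rw [dist_eq_norm, S1.coe_sub']
  simpa using QuotientAddGroup.norm_mk_le_norm (S := AddSubgroup.zmultiples (2 * Real.pi)) (m := s - t)

lemma dist_coe_eq {s t : ℝ} (h : |s - t| ≤ Real.pi) :
    dist ((s : S1)) ((t : S1)) = |s - t| := by
  rw [dist_eq_norm, S1.coe_sub', AddCircle.norm_coe_eq_abs_iff]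
  · simpa [abs_of_pos Real.two_pi_pos] using h
  · positivity

lemma exists_lift (x : S1) (t : ℝ) :
    ∃ s : ℝ, (s : S1) = x ∧ |s - t| ≤ Real.pi ∧ dist x ((t : S1)) = |s - t| := by
  obtain ⟨u, rfl⟩ := QuotientAddGroup.mk_surjective x
  set k : ℤ := round ((2 * Real.pi)⁻¹ * (u - t)) with hk
  have hd : dist ((u : S1)) ((t : S1)) = |(u - t) - k * (2 * Real.pi)| := by
    rw [dist_eq_norm, S1.coe_sub', AddCircle.norm_eq]
  have hle : |(u - t) - k * (2 * Real.pi)| ≤ Real.pi := by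
    rw [← hd, dist_eq_norm]
    have := AddCircle.norm_le_half_period (p := 2 * Real.pi)
      (x := (u : S1) - (t : S1)) (by positivity)
    rwa [abs_of_pos Real.two_pi_pos, show 2 * Real.pi / 2 = Real.pi by ring] at this
  have hcoe : ((u - k * (2 * Real.pi) : ℝ) : S1) = (u : S1) := by
    rw [← sub_eq_zero, S1.coe_sub']
    rw [QuotientAddGroup.eq_zero_iff]
    refine ⟨-k, by push_cast [zsmul_eq_mul]; ring⟩
  refine ⟨u - k * (2 * Real.pi), hcoe, by simpa [sub_sub, add_comm] using hle, ?_⟩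
  · rw [hd]; congr 1; ring
lemma S1.coe_eq_iff {s t : ℝ} : (s : S1) = (t : S1) ↔ ∃ k : ℤ, t = s + k * (2 * Real.pi) := by
  rw [eq_comm, QuotientAddGroup.eq_iff_sub_mem]
  constructor
  · rintro ⟨k, hk⟩
    refine ⟨k, ?_⟩
    have : (k : ℝ) * (2 * Real.pi) = t - s := by
      rw [← hk]; push_cast [zsmul_eq_mul]; ring
    linarith
  · rintro ⟨k, hk⟩
    refine ⟨k, ?_⟩
    show (k : ℤ) • (2 * Real.pi) = t - s
    push_cast [zsmul_eq_mul]
    rw [hk]; ring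

lemma S1.coe_shift {m n : ℝ} (h : (m : S1) = (n : S1)) (e : ℝ) :
    ((m + e : ℝ) : S1) = ((n + e : ℝ) : S1) := by
  rw [S1.coe_eq_iff] at h ⊢
  obtain ⟨k, hk⟩ := h
  exact ⟨k, by rw [hk]; ring⟩

/-- The image of `[a,b]` in the circle. -/
def arcIm (a b : ℝ) : Set S1 := (fun t : ℝ => (t : S1)) '' Set.Icc a b

lemma mem_arcIm {a b : ℝ} {x : S1} : x ∈ arcIm a b ↔ ∃ s ∈ Set.Icc a b, (s : S1) = x :=
  Set.mem_image _ _ _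

lemma coe_mem_arcIm {a b s : ℝ} (h : s ∈ Set.Icc a b) : ((s : ℝ) : S1) ∈ arcIm a b :=
  ⟨s, h, rfl⟩

lemma isCompact_arcIm (a b : ℝ) : IsCompact (arcIm a b) :=
  (isCompact_Icc).image (AddCircle.continuous_mk' _)

lemma isClosed_arcIm (a b : ℝ) : IsClosed (arcIm a b) :=
  (isCompact_arcIm a b).isClosed

lemma not_excluded_iff {r : ℝ} {Θ : Set S1} {x : S1} :
    ¬ ExcludedBy r Θ x ↔ ∀ θ ∈ Θ, dist θ x ≤ r := by
  simp [ExcludedBy, not_exists, not_lt]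

/-- Right gap lemma: the points in `(b, b + (π - r)]` just beyond the right end of an
arc are excluded. -/
lemma gap_right {r : ℝ} (hr0 : 0 ≤ r) (hrπ : r < Real.pi) {Θ : Set S1} {a b : ℝ}
    (hab : a ≤ b) (hb2 : b < a + 2 * Real.pi) (harc : IsArc r Θ (arcIm a b))
    {t : ℝ} (ht0 : 0 < t) (htr : t ≤ Real.pi - r) :
    ExcludedBy r Θ ((b + t : ℝ) : S1) := by
  have hπ := Real.pi_pos
  set η := min (t / 2) ((a + 2 * Real.pi - b) / 2) with hηdef
  have hη0 : 0 < η := lt_min (by linarith) (by linarith)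
  have hηt : η ≤ t / 2 := min_le_left _ _
  have hηa : b + η < a + 2 * Real.pi := by
    have h' : η ≤ (a + 2 * Real.pi - b) / 2 := min_le_right _ _
    linarith
  have hηπ : η < Real.pi - r := by linarith
  have hAB : arcIm a b ⊆ arcIm a (b + η) :=
    Set.image_mono (Set.Icc_subset_Icc le_rfl (by linarith))
  have hBarc : IsClosedArc (arcIm a (b + η)) := ⟨a, b + η, by linarith, by linarith, rfl⟩
  obtain ⟨x₀, hx₀A, hx₀Θ⟩ := harc.2.1
  have hBΘ : (arcIm a (b + η) ∩ Θ).Nonempty := ⟨x₀, hAB hx₀A, hx₀Θ⟩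
  have hne : arcIm a b ≠ arcIm a (b + η) := by
    intro h
    have hmem : ((b + η : ℝ) : S1) ∈ arcIm a b := by
      rw [h]; exact coe_mem_arcIm ⟨by linarith, le_rfl⟩
    obtain ⟨s, hs, hseq⟩ := mem_arcIm.1 hmem
    obtain ⟨k, hk⟩ := S1.coe_eq_iff.1 hseq
    rcases lt_trichotomy k 0 with hklt | hkeq | hkgt
    · have hk1 : (k : ℝ) ≤ -1 := by exact_mod_cast (by omega : k ≤ -1)
      nlinarith [hs.1, hs.2]
    · subst hkeq; simp at hk; nlinarith [hs.2]
    · have hk1 : (1 : ℝ) ≤ (k : ℝ) := by exact_mod_cast hkgt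
      nlinarith [hs.1]
  have hex : ¬ ∀ x ∈ arcIm a (b + η), ¬ ExcludedBy r Θ x := by
    intro h
    exact hne (harc.2.2.2 _ hBarc hBΘ h hAB)
  push_neg at hex
  obtain ⟨x, hxB, hxE⟩ := hex
  obtain ⟨m, hm, hmeq⟩ := mem_arcIm.1 hxB
  obtain ⟨θ, hθΘ, hθx⟩ := hxE
  have hmb : b < m := by
    by_contra hmb
    push_neg at hmb
    exact harc.2.2.1 x (hmeq ▸ coe_mem_arcIm ⟨hm.1, hmb⟩) ⟨θ, hθΘ, hθx⟩
  have hmη : m - b ≤ η := by linarith [hm.2]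
  obtain ⟨w, hw, hwπ, hwd⟩ := exists_lift θ m
  rw [hmeq] at hwd
  have hwr : r < |w - m| := hwd ▸ hθx
  have hbA : dist θ ((b : ℝ) : S1) ≤ r := by
    have h' := harc.2.2.1 _ (coe_mem_arcIm ⟨hab, le_rfl⟩)
    rw [not_excluded_iff] at h'
    exact h' θ hθΘ
  have hwm : w < m := by
    by_contra hwm
    push_neg at hwm
    have hwm' : r < w - m := by
      have h' := hwr; rw [abs_of_nonneg (by linarith)] at h'; linarith
    rcases le_or_gt (w - b) Real.pi with hcase | hcase
    · have hd : dist θ ((b : ℝ) : S1) = w - b := by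
        rw [← hw, dist_coe_eq (by rw [abs_of_nonneg (by linarith)]; linarith)]
        rw [abs_of_nonneg (by linarith)]
      linarith
    · have hb2π : ((b + 2 * Real.pi : ℝ) : S1) = ((b : ℝ) : S1) := by
        rw [S1.coe_eq_iff]; exact ⟨-1, by push_cast; ring⟩
      have hwub : w ≤ m + Real.pi := by
        have := abs_le.1 hwπ; linarith [this.2]
      have habs : |w - (b + 2 * Real.pi)| ≤ Real.pi := by
        rw [abs_le]; constructor <;> linarith
      have hd : dist θ ((b : ℝ) : S1) = b + 2 * Real.pi - w := by
        rw [← hb2π, ← hw, dist_coe_eq habs, abs_of_nonpos (by linarith)]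
        ring
      have : Real.pi - η ≤ b + 2 * Real.pi - w := by linarith
      linarith
  have hwm' : r < m - w := by
    have h' := hwr; rw [abs_of_nonpos (by linarith)] at h'; linarith
  have hbw : r - η < b - w := by linarith
  have hwbr : b - r ≤ w := by
    rcases le_or_gt b w with hcase | hcase
    · linarith
    · have hπw := (abs_le.1 hwπ).1
      have hd : dist θ ((b : ℝ) : S1) = b - w := by
        rw [← hw, dist_coe_eq (by rw [abs_of_nonpos (by linarith)]; linarith)]
        rw [abs_of_nonpos (by linarith)]; ring
      linarith [hd ▸ hbA]
  refine ⟨θ, hθΘ, ?_⟩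
  have hd : dist θ ((b + t : ℝ) : S1) = b + t - w := by
    rw [← hw, dist_coe_eq ?_]
    · rw [abs_of_nonpos (by linarith)]; ring
    · rw [abs_of_nonpos (by linarith)]; linarith
  rw [hd]
  linarith

/-- Left gap lemma: the points in `[a - (π - r), a)` just beyond the left end of an
arc are excluded. -/
lemma gap_left {r : ℝ} (hr0 : 0 ≤ r) (hrπ : r < Real.pi) {Θ : Set S1} {a b : ℝ}
    (hab : a ≤ b) (hb2 : b < a + 2 * Real.pi) (harc : IsArc r Θ (arcIm a b))
    {t : ℝ} (ht0 : 0 < t) (htr : t ≤ Real.pi - r) :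
    ExcludedBy r Θ ((a - t : ℝ) : S1) := by
  have hπ := Real.pi_pos
  set η := min (t / 2) ((a + 2 * Real.pi - b) / 2) with hηdef
  have hη0 : 0 < η := lt_min (by linarith) (by linarith)
  have hηt : η ≤ t / 2 := min_le_left _ _
  have hηa : b + η < a + 2 * Real.pi := by
    have h' : η ≤ (a + 2 * Real.pi - b) / 2 := min_le_right _ _
    linarith
  have hηπ : η < Real.pi - r := by linarith
  have hAB : arcIm a b ⊆ arcIm (a - η) b :=
    Set.image_mono (Set.Icc_subset_Icc (by linarith) le_rfl)
  have hBarc : IsClosedArc (arcIm (a - η) b) := ⟨a - η, b, by linarith, by linarith, rfl⟩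
  obtain ⟨x₀, hx₀A, hx₀Θ⟩ := harc.2.1
  have hBΘ : (arcIm (a - η) b ∩ Θ).Nonempty := ⟨x₀, hAB hx₀A, hx₀Θ⟩
  have hne : arcIm a b ≠ arcIm (a - η) b := by
    intro h
    have hmem : ((a - η : ℝ) : S1) ∈ arcIm a b := by
      rw [h]; exact coe_mem_arcIm ⟨le_rfl, by linarith⟩
    obtain ⟨s, hs, hseq⟩ := mem_arcIm.1 hmem
    obtain ⟨k, hk⟩ := S1.coe_eq_iff.1 hseq
    rcases lt_trichotomy k 0 with hklt | hkeq | hkgt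
    · have hk1 : (k : ℝ) ≤ -1 := by exact_mod_cast (by omega : k ≤ -1)
      nlinarith [hs.1, hs.2]
    · subst hkeq; simp at hk; nlinarith [hs.1]
    · have hk1 : (1 : ℝ) ≤ (k : ℝ) := by exact_mod_cast hkgt
      nlinarith [hs.1]
  have hex : ¬ ∀ x ∈ arcIm (a - η) b, ¬ ExcludedBy r Θ x := by
    intro h
    exact hne (harc.2.2.2 _ hBarc hBΘ h hAB)
  push_neg at hex
  obtain ⟨x, hxB, hxE⟩ := hex
  obtain ⟨m, hm, hmeq⟩ := mem_arcIm.1 hxB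
  obtain ⟨θ, hθΘ, hθx⟩ := hxE
  have hmb : m < a := by
    by_contra hmb
    push_neg at hmb
    exact harc.2.2.1 x (hmeq ▸ coe_mem_arcIm ⟨hmb, hm.2⟩) ⟨θ, hθΘ, hθx⟩
  have hmη : a - m ≤ η := by linarith [hm.1]
  obtain ⟨w, hw, hwπ, hwd⟩ := exists_lift θ m
  rw [hmeq] at hwd
  have hwr : r < |w - m| := hwd ▸ hθx
  have haA : dist θ ((a : ℝ) : S1) ≤ r := by
    have h' := harc.2.2.1 _ (coe_mem_arcIm ⟨le_rfl, hab⟩)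
    rw [not_excluded_iff] at h'
    exact h' θ hθΘ
  have hwm : m < w := by
    by_contra hwm
    push_neg at hwm
    have hwm' : r < m - w := by
      have h' := hwr; rw [abs_of_nonpos (by linarith)] at h'; linarith
    rcases le_or_gt (a - w) Real.pi with hcase | hcase
    · have hd : dist θ ((a : ℝ) : S1) = a - w := by
        rw [← hw, dist_coe_eq (by rw [abs_of_nonpos (by linarith)]; linarith)]
        rw [abs_of_nonpos (by linarith)]; ring
      linarith
    · have ha2π : ((a - 2 * Real.pi : ℝ) : S1) = ((a : ℝ) : S1) := by
        rw [S1.coe_eq_iff]; exact ⟨1, by push_cast; ring⟩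
      have hwlb : m - Real.pi ≤ w := by
        have := abs_le.1 hwπ; linarith [this.1]
      have habs : |w - (a - 2 * Real.pi)| ≤ Real.pi := by
        rw [abs_le]; constructor <;> linarith
      have hd : dist θ ((a : ℝ) : S1) = w - (a - 2 * Real.pi) := by
        rw [← ha2π, ← hw, dist_coe_eq habs, abs_of_nonneg (by linarith)]
      have : Real.pi - η ≤ w - (a - 2 * Real.pi) := by linarith
      linarith
  have hwm' : r < w - m := by
    have h' := hwr; rw [abs_of_nonneg (by linarith)] at h'; linarith
  have haw : r - η < w - a := by linarith
  have hwar : w ≤ a + r := by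
    rcases le_or_gt w a with hcase | hcase
    · linarith
    · have hπw := (abs_le.1 hwπ).2
      have hd : dist θ ((a : ℝ) : S1) = w - a := by
        rw [← hw, dist_coe_eq (by rw [abs_of_nonneg (by linarith)]; linarith)]
        rw [abs_of_nonneg (by linarith)]
      linarith [hd ▸ haA]
  refine ⟨θ, hθΘ, ?_⟩
  have hd : dist θ ((a - t : ℝ) : S1) = w - (a - t) := by
    rw [← hw, dist_coe_eq ?_]
    · rw [abs_of_nonneg (by linarith)]
    · rw [abs_of_nonneg (by linarith)]; linarith
  rw [hd]
  linarith

/-- A non-excluded point with a lift within `π - r` of the defining interval of an arc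
belongs to the arc. -/
lemma mem_arc_of_not_excluded {r : ℝ} (hr0 : 0 ≤ r) (hrπ : r < Real.pi) {Θ : Set S1}
    {a b : ℝ} (hab : a ≤ b) (hb2 : b < a + 2 * Real.pi) (harc : IsArc r Θ (arcIm a b))
    {q : ℝ} (hq : q ∈ Set.Icc (a - (Real.pi - r)) (b + (Real.pi - r)))
    (hne : ¬ ExcludedBy r Θ ((q : ℝ) : S1)) :
    ((q : ℝ) : S1) ∈ arcIm a b := by
  rcases le_or_gt q b with hqb | hqb
  · rcases le_or_gt a q with haq | haq
    · exact coe_mem_arcIm ⟨haq, hqb⟩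
    · exfalso
      have : ExcludedBy r Θ ((a - (a - q) : ℝ) : S1) :=
        gap_left hr0 hrπ hab hb2 harc (by linarith) (by linarith [hq.1])
      rw [show a - (a - q) = q by ring] at this
      exact hne this
  · exfalso
    have : ExcludedBy r Θ ((b + (q - b) : ℝ) : S1) :=
      gap_right hr0 hrπ hab hb2 harc (by linarith) (by linarith [hq.2])
    rw [show b + (q - b) = q by ring] at this
    exact hne this

/-- Distinct arcs are disjoint. -/
lemma arc_disjoint {r : ℝ} (hr0 : 0 ≤ r) (hrπ : r < Real.pi) {Θ : Set S1}
    {A B : Set S1} (hA : IsArc r Θ A) (hB : IsArc r Θ B) (hne : A ≠ B) :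
    A ∩ B = ∅ := by
  obtain ⟨a, b, hab, hb2, hAeq⟩ := hA.1
  obtain ⟨u, v, huv, hv2, hBeq⟩ := hB.1
  have hAeq' : A = arcIm a b := hAeq
  have hBeq' : B = arcIm u v := hBeq
  subst hAeq' hBeq'
  by_contra hcon
  obtain ⟨x, hxA, hxB⟩ := Set.nonempty_iff_ne_empty.2 hcon
  -- we show B ⊆ A, whence B = A by maximality of B
  have hBA : arcIm u v ⊆ arcIm a b := by
    intro w hwB
    by_contra hwA
    obtain ⟨s₁', hs₁, hw1⟩ := mem_arcIm.1 hwB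
    obtain ⟨s₀', hs₀, hx0⟩ := mem_arcIm.1 hxB
    set s₀ := s₀' - u with hs₀def
    set s₁ := s₁' - u with hs₁def
    have hs₀m : s₀ ∈ Set.Icc 0 (v - u) := ⟨by simp [hs₀def]; linarith [hs₀.1], by simp [hs₀def]; linarith [hs₀.2]⟩
    have hs₁m : s₁ ∈ Set.Icc 0 (v - u) := ⟨by simp [hs₁def]; linarith [hs₁.1], by simp [hs₁def]; linarith [hs₁.2]⟩
    rcases le_or_gt s₀ s₁ with hcase | hcase
    · -- walk right
      set T := {t : ℝ | t ∈ Set.Icc s₀ s₁ ∧ ((u + t : ℝ) : S1) ∈ arcIm a b} with hTdef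
      have hTne : T.Nonempty := ⟨s₀, ⟨le_rfl, hcase⟩, by
        rw [show u + s₀ = s₀' by rw [hs₀def]; ring, hx0]; exact hxA⟩
      have hTcompact : IsCompact T := by
        have : T = Set.Icc s₀ s₁ ∩ ((fun t : ℝ => ((u + t : ℝ) : S1)) ⁻¹' arcIm a b) := rfl
        rw [this]
        exact isCompact_Icc.inter_right
          ((isClosed_arcIm a b).preimage ((AddCircle.continuous_mk' _).comp (continuous_const.add continuous_id)))
      have hTmem := hTcompact.sSup_mem hTne
      set tstar := sSup T with htstar
      have htmem : tstar ∈ T := hTmem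
      have htlt : tstar < s₁ := by
        rcases lt_or_eq_of_le htmem.1.2 with h | h
        · exact h
        · exfalso
          apply hwA
          rw [← hw1, show s₁' = u + tstar by rw [h, hs₁def]; ring]
          exact htmem.2
      obtain ⟨mstar, hmstar, hmeq⟩ := mem_arcIm.1 htmem.2
      set e := min (s₁ - tstar) (Real.pi - r) with hedef
      have he0 : 0 < e := lt_min (by linarith) (by linarith)
      have heπ : e ≤ Real.pi - r := min_le_right _ _
      have hes : tstar + e ≤ s₁ := by
        have := min_le_left (s₁ - tstar) (Real.pi - r); linarith [this]
      have hmem2 : ((u + (tstar + e) : ℝ) : S1) ∈ arcIm u v := by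
        apply coe_mem_arcIm
        constructor
        · linarith [htmem.1.1, hs₀m.1]
        · linarith [hs₁m.2]
      have hnexcl : ¬ ExcludedBy r Θ ((u + (tstar + e) : ℝ) : S1) :=
        hB.2.2.1 _ hmem2
      have hshift : ((u + (tstar + e) : ℝ) : S1) = ((mstar + e : ℝ) : S1) := by
        have h1 : ((u + tstar : ℝ) : S1) = ((mstar : ℝ) : S1) := hmeq.symm
        have := S1.coe_shift h1 e
        rw [show u + tstar + e = u + (tstar + e) by ring] at this
        exact this
      have hmemA : ((mstar + e : ℝ) : S1) ∈ arcIm a b := by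
        apply mem_arc_of_not_excluded hr0 hrπ hab hb2 hA
        · constructor
          · show a - (Real.pi - r) ≤ _; linarith [hmstar.1]
          · show _ ≤ b + (Real.pi - r); linarith [hmstar.2]
        · rw [← hshift]; exact hnexcl
      have : tstar + e ∈ T := ⟨⟨by linarith [htmem.1.1], hes⟩, by rw [hshift]; exact hmemA⟩
      have : tstar + e ≤ tstar := le_csSup hTcompact.bddAbove this
      linarith
    · -- walk left
      set T := {t : ℝ | t ∈ Set.Icc s₁ s₀ ∧ ((u + t : ℝ) : S1) ∈ arcIm a b} with hTdef
      have hTne : T.Nonempty := ⟨s₀, ⟨le_of_lt hcase, le_rfl⟩, by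
        rw [show u + s₀ = s₀' by rw [hs₀def]; ring, hx0]; exact hxA⟩
      have hTcompact : IsCompact T := by
        have : T = Set.Icc s₁ s₀ ∩ ((fun t : ℝ => ((u + t : ℝ) : S1)) ⁻¹' arcIm a b) := rfl
        rw [this]
        exact isCompact_Icc.inter_right
          ((isClosed_arcIm a b).preimage ((AddCircle.continuous_mk' _).comp (continuous_const.add continuous_id)))
      have hTmem := hTcompact.sInf_mem hTne
      set tstar := sInf T with htstar
      have htmem : tstar ∈ T := hTmem
      have htlt : s₁ < tstar := by
        rcases lt_or_eq_of_le htmem.1.1 with h | h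
        · exact h
        · exfalso
          apply hwA
          rw [← hw1, show s₁' = u + tstar by rw [← h, hs₁def]; ring]
          exact htmem.2
      obtain ⟨mstar, hmstar, hmeq⟩ := mem_arcIm.1 htmem.2
      set e := min (tstar - s₁) (Real.pi - r) with hedef
      have he0 : 0 < e := lt_min (by linarith) (by linarith)
      have heπ : e ≤ Real.pi - r := min_le_right _ _
      have hes : s₁ ≤ tstar - e := by
        have := min_le_left (tstar - s₁) (Real.pi - r); linarith [this]
      have hmem2 : ((u + (tstar - e) : ℝ) : S1) ∈ arcIm u v := by
        apply coe_mem_arcIm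
        constructor
        · linarith [hs₁m.1]
        · linarith [htmem.1.2, hs₀m.2]
      have hnexcl : ¬ ExcludedBy r Θ ((u + (tstar - e) : ℝ) : S1) :=
        hB.2.2.1 _ hmem2
      have hshift : ((u + (tstar - e) : ℝ) : S1) = ((mstar - e : ℝ) : S1) := by
        have h1 : ((u + tstar : ℝ) : S1) = ((mstar : ℝ) : S1) := hmeq.symm
        have := S1.coe_shift h1 (-e)
        rw [show u + tstar + -e = u + (tstar - e) by ring,
          show mstar + -e = mstar - e by ring] at this
        exact this
      have hmemA : ((mstar - e : ℝ) : S1) ∈ arcIm a b := by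
        apply mem_arc_of_not_excluded hr0 hrπ hab hb2 hA
        · constructor
          · show a - (Real.pi - r) ≤ _; linarith [hmstar.1]
          · show _ ≤ b + (Real.pi - r); linarith [hmstar.2]
        · rw [← hshift]; exact hnexcl
      have : tstar - e ∈ T := ⟨⟨hes, by linarith [htmem.1.2]⟩, by rw [hshift]; exact hmemA⟩
      have : tstar ≤ tstar - e := csInf_le hTcompact.bddBelow this
      linarith
  exact hne ((hB.2.2.2 _ hA.1 hA.2.1 hA.2.2.1 hBA).symm)

/-- Extensions by `(π - r)/2` of distinct arcs are disjoint. -/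
lemma ext_disjoint {r : ℝ} (hr0 : 0 ≤ r) (hrπ : r < Real.pi) {Θ : Set S1}
    {a b u v : ℝ} (hab : a ≤ b) (hb2 : b < a + 2 * Real.pi)
    (huv : u ≤ v) (hv2 : v < u + 2 * Real.pi)
    (hA : IsArc r Θ (arcIm a b)) (hB : IsArc r Θ (arcIm u v))
    (hne : arcIm a b ≠ arcIm u v) :
    Disjoint (arcIm (a - (Real.pi - r) / 2) (b + (Real.pi - r) / 2))
      (arcIm (u - (Real.pi - r) / 2) (v + (Real.pi - r) / 2)) := by
  set c := (Real.pi - r) / 2 with hcdef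
  have hc0 : 0 < c := by have := Real.pi_pos; simp [hcdef]; linarith
  rw [Set.disjoint_left]
  rintro z hz1 hz2
  obtain ⟨m, hm, hmeq⟩ := mem_arcIm.1 hz1
  obtain ⟨n, hn, hneq⟩ := mem_arcIm.1 hz2
  set nh := max u (min n v) with hnhdef
  have hnhm : nh ∈ Set.Icc u v := by
    constructor
    · exact le_max_left _ _
    · rw [hnhdef]; exact max_le huv (min_le_right _ _)
  have hnhc : |nh - n| ≤ c := by
    rw [abs_le]
    constructor
    · rw [hnhdef]
      rcases le_or_gt n v with h | h
      · have : min n v = n := min_eq_left h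
        rw [this]
        have : n ≤ max u n := le_max_right _ _
        linarith
      · have : min n v = v := min_eq_right (le_of_lt h)
        rw [this]
        have h2 : v ≤ max u v := le_max_right _ _
        have h3 : n ≤ v + c := hn.2
        linarith
    · rw [hnhdef]
      rcases le_or_gt u n with h | h
      · have h1 : max u (min n v) ≤ max u n := max_le (le_max_left _ _)
          (le_trans (min_le_left _ _) (le_max_right _ _))
        have h2 : max u n = n := max_eq_right h
        linarith [h1, h2 ▸ h1]
      · have h1 : u - c ≤ n := hn.1
        have h2 : min n v = n := min_eq_left (by linarith)
        have h3 : max u (min n v) = u := by rw [h2]; exact max_eq_left (le_of_lt h)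
        rw [h3]; linarith
  have hshift : ((nh : ℝ) : S1) = ((m + (nh - n) : ℝ) : S1) := by
    have h1 : ((n : ℝ) : S1) = ((m : ℝ) : S1) := by rw [hneq, ← hmeq]
    have := S1.coe_shift h1 (nh - n)
    rw [show n + (nh - n) = nh by ring] at this
    exact this
  have hq : m + (nh - n) ∈ Set.Icc (a - (Real.pi - r)) (b + (Real.pi - r)) := by
    have h1 := abs_le.1 hnhc
    constructor
    · have := hm.1; simp only [hcdef] at this ⊢; linarith [h1.1]
    · have := hm.2; simp only [hcdef] at this ⊢; linarith [h1.2]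
  have hnexcl : ¬ ExcludedBy r Θ ((m + (nh - n) : ℝ) : S1) := by
    rw [← hshift]
    exact hB.2.2.1 _ (coe_mem_arcIm hnhm)
  have hmemA : ((m + (nh - n) : ℝ) : S1) ∈ arcIm a b :=
    mem_arc_of_not_excluded hr0 hrπ hab hb2 hA hq hnexcl
  have : ((nh : ℝ) : S1) ∈ arcIm a b ∩ arcIm u v :=
    ⟨hshift ▸ hmemA, coe_mem_arcIm hnhm⟩
  rw [arc_disjoint hr0 hrπ hA hB hne] at this
  exact this

/-- Every point of `Θ` lies in some `(Θ,r)`-arc. -/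
lemma exists_arc_mem {r : ℝ} (hr0 : 0 ≤ r) (hrπ : r < Real.pi) {Θ : Set S1}
    (hdiam : ∀ θ ∈ Θ, ∀ θ' ∈ Θ, dist θ θ' ≤ r) {θ : S1} (hθ : θ ∈ Θ) :
    ∃ A : Set S1, IsArc r Θ A ∧ θ ∈ A := by
  have hπ := Real.pi_pos
  set P : ℝ → Prop := fun s => ∀ θ' ∈ Θ, dist θ' ((s : ℝ) : S1) ≤ r with hPdef
  have hPclosed : IsClosed {s : ℝ | P s} := by
    have : {s : ℝ | P s} = ⋂ θ' ∈ Θ, {s : ℝ | dist θ' ((s : ℝ) : S1) ≤ r} := by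
      ext s; simp [hPdef]
    rw [this]
    exact isClosed_biInter fun θ' _ =>
      isClosed_le (continuous_const.dist (AddCircle.continuous_mk' _)) continuous_const
  obtain ⟨t₀, ht₀⟩ := QuotientAddGroup.mk_surjective θ
  have hPt₀ : P t₀ := fun θ' hθ' => by rw [ht₀]; exact hdiam θ' hθ' θ hθ
  set SP := {e : ℝ | e ∈ Set.Icc 0 r ∧ ∀ s ∈ Set.Icc t₀ (t₀ + e), P s} with hSPdef
  set SM := {e : ℝ | e ∈ Set.Icc 0 r ∧ ∀ s ∈ Set.Icc (t₀ - e) t₀, P s} with hSMdef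
  have h0SP : (0 : ℝ) ∈ SP := ⟨⟨le_rfl, hr0⟩, fun s hs => by
    have : s = t₀ := le_antisymm (by simpa using hs.2) hs.1
    rwa [this]⟩
  have h0SM : (0 : ℝ) ∈ SM := ⟨⟨le_rfl, hr0⟩, fun s hs => by
    have : s = t₀ := le_antisymm hs.2 (by simpa using hs.1)
    rwa [this]⟩
  have hSPbdd : BddAbove SP := ⟨r, fun e he => he.1.2⟩
  have hSMbdd : BddAbove SM := ⟨r, fun e he => he.1.2⟩
  set uP := sSup SP with huPdef
  set uM := sSup SM with huMdef
  have huP0 : 0 ≤ uP := le_csSup hSPbdd h0SP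
  have huM0 : 0 ≤ uM := le_csSup hSMbdd h0SM
  have huPr : uP ≤ r := csSup_le ⟨0, h0SP⟩ fun e he => he.1.2
  have huMr : uM ≤ r := csSup_le ⟨0, h0SM⟩ fun e he => he.1.2
  have huPmem : ∀ s ∈ Set.Icc t₀ (t₀ + uP), P s := by
    intro s hs
    rcases lt_or_eq_of_le hs.2 with h | h
    · by_contra hPs
      have hub : ∀ e ∈ SP, e ≤ s - t₀ := by
        intro e he
        by_contra hc
        push_neg at hc
        exact hPs (he.2 s ⟨hs.1, by linarith⟩)
      have : uP ≤ s - t₀ := csSup_le ⟨0, h0SP⟩ hub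
      linarith
    · rcases eq_or_lt_of_le huP0 with h0 | h0
      · have : s = t₀ := by rw [h, ← h0]; ring
        rwa [this]
      · have hsub : Set.Ico t₀ (t₀ + uP) ⊆ {s : ℝ | P s} := by
          intro s' hs'
          by_contra hPs
          have hub : ∀ e ∈ SP, e ≤ s' - t₀ := by
            intro e he
            by_contra hc
            push_neg at hc
            exact hPs (he.2 s' ⟨hs'.1, by linarith⟩)
          have : uP ≤ s' - t₀ := csSup_le ⟨0, h0SP⟩ hub
          linarith [hs'.2]
        have hclos : Set.Icc t₀ (t₀ + uP) ⊆ {s : ℝ | P s} := by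
          rw [← closure_Ico (by linarith : t₀ ≠ t₀ + uP)]
          exact hPclosed.closure_subset_iff.2 hsub
        exact hclos ⟨hs.1, le_of_eq h⟩
  have huMmem : ∀ s ∈ Set.Icc (t₀ - uM) t₀, P s := by
    intro s hs
    rcases lt_or_eq_of_le hs.1 with h | h
    · by_contra hPs
      have hub : ∀ e ∈ SM, e ≤ t₀ - s := by
        intro e he
        by_contra hc
        push_neg at hc
        exact hPs (he.2 s ⟨by linarith, hs.2⟩)
      have : uM ≤ t₀ - s := csSup_le ⟨0, h0SM⟩ hub
      linarith
    · rcases eq_or_lt_of_le huM0 with h0 | h0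
      · have : s = t₀ := by rw [← h, ← h0]; ring
        rwa [this]
      · have hsub : Set.Ioc (t₀ - uM) t₀ ⊆ {s : ℝ | P s} := by
          intro s' hs'
          by_contra hPs
          have hub : ∀ e ∈ SM, e ≤ t₀ - s' := by
            intro e he
            by_contra hc
            push_neg at hc
            exact hPs (he.2 s' ⟨by linarith, hs'.2⟩)
          have : uM ≤ t₀ - s' := csSup_le ⟨0, h0SM⟩ hub
          linarith [hs'.1]
        have hclos : Set.Icc (t₀ - uM) t₀ ⊆ {s : ℝ | P s} := by
          rw [← closure_Ioc (by linarith : t₀ - uM ≠ t₀)]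
          exact hPclosed.closure_subset_iff.2 hsub
        exact hclos ⟨le_of_eq h, hs.2⟩
  refine ⟨arcIm (t₀ - uM) (t₀ + uP), ⟨⟨t₀ - uM, t₀ + uP, by linarith, by linarith, rfl⟩,
    ⟨θ, ht₀ ▸ coe_mem_arcIm ⟨by linarith, by linarith⟩, hθ⟩, ?_, ?_⟩,
    ht₀ ▸ coe_mem_arcIm ⟨by linarith, by linarith⟩⟩
  · rintro x hx
    obtain ⟨s, hs, hseq⟩ := mem_arcIm.1 hx
    rw [not_excluded_iff, ← hseq]
    rcases le_or_gt t₀ s with h | h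
    · exact fun θ' hθ' => huPmem s ⟨h, hs.2⟩ θ' hθ'
    · exact fun θ' hθ' => huMmem s ⟨hs.1, le_of_lt h⟩ θ' hθ'
  · rintro B hBarc hBΘ hBgood hsub
    obtain ⟨c, d, hcd, hd2, hBeq⟩ := hBarc
    subst hBeq
    by_contra hne
    have hBA : ¬ ((fun t : ℝ => (t : S1)) '' Set.Icc c d ⊆ arcIm (t₀ - uM) (t₀ + uP)) := by
      intro h
      exact hne (le_antisymm hsub h)
    obtain ⟨w, hwB, hwA⟩ := Set.not_subset.1 hBA
    obtain ⟨e₁', he₁, hw1⟩ := hwB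
    have hθB : θ ∈ (fun t : ℝ => (t : S1)) '' Set.Icc c d :=
      hsub (ht₀ ▸ coe_mem_arcIm ⟨by linarith, by linarith⟩)
    obtain ⟨e₀', he₀, hθ0⟩ := hθB
    have hθmem : ∀ θ' ∈ Θ, ∀ y : S1, y ∈ (fun t : ℝ => (t : S1)) '' Set.Icc c d →
        dist θ' y ≤ r := by
      intro θ' hθ' y hy
      have := hBgood y hy
      rw [not_excluded_iff] at this
      exact this θ' hθ'
    rcases le_or_gt e₀' e₁' with hcase | hcase
    · have hle : e₁' - e₀' ≤ r := by
        by_contra hgt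
        push_neg at hgt
        set e := min (e₁' - e₀') Real.pi with hedef
        have her : r < e := lt_min hgt hrπ
        have heπ : e ≤ Real.pi := min_le_right _ _
        have hee : e ≤ e₁' - e₀' := min_le_left _ _
        have hmem : ((e₀' + e : ℝ) : S1) ∈ (fun t : ℝ => (t : S1)) '' Set.Icc c d :=
          ⟨e₀' + e, ⟨by linarith [he₀.1], by linarith [he₁.2]⟩, rfl⟩
        have hdist : dist θ ((e₀' + e : ℝ) : S1) = e := by
          rw [← hθ0]
          show dist ((e₀' : ℝ) : S1) _ = e
          rw [dist_coe_eq (by rw [abs_of_nonpos (by linarith)]; linarith)]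
          rw [abs_of_nonpos (by linarith)]; ring
        have := hθmem θ hθ _ hmem
        rw [hdist] at this
        linarith
      have hmemSP : e₁' - e₀' ∈ SP := by
        refine ⟨⟨by linarith, hle⟩, fun s hs => ?_⟩
        have hshift : ((s : ℝ) : S1) = ((e₀' + (s - t₀) : ℝ) : S1) := by
          have h1 : ((t₀ : ℝ) : S1) = ((e₀' : ℝ) : S1) := by rw [ht₀, ← hθ0]
          have := S1.coe_shift h1 (s - t₀)
          rw [show t₀ + (s - t₀) = s by ring] at this
          exact this
        intro θ' hθ'
        rw [hshift]
        exact hθmem θ' hθ' _ ⟨e₀' + (s - t₀),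
          ⟨by linarith [he₀.1, hs.1], by linarith [he₁.2, hs.2]⟩, rfl⟩
      have hup : e₁' - e₀' ≤ uP := le_csSup hSPbdd hmemSP
      apply hwA
      have hshift : ((e₁' : ℝ) : S1) = ((t₀ + (e₁' - e₀') : ℝ) : S1) := by
        have h1 : ((e₀' : ℝ) : S1) = ((t₀ : ℝ) : S1) := by rw [ht₀]; exact hθ0
        have := S1.coe_shift h1 (e₁' - e₀')
        rw [show e₀' + (e₁' - e₀') = e₁' by ring] at this
        exact this
      rw [← hw1]
      show ((e₁' : ℝ) : S1) ∈ _
      rw [hshift]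
      exact coe_mem_arcIm ⟨by linarith, by linarith⟩
    · have hle : e₀' - e₁' ≤ r := by
        by_contra hgt
        push_neg at hgt
        set e := min (e₀' - e₁') Real.pi with hedef
        have her : r < e := lt_min hgt hrπ
        have heπ : e ≤ Real.pi := min_le_right _ _
        have hee : e ≤ e₀' - e₁' := min_le_left _ _
        have hmem : ((e₀' - e : ℝ) : S1) ∈ (fun t : ℝ => (t : S1)) '' Set.Icc c d :=
          ⟨e₀' - e, ⟨by linarith [he₁.1], by linarith [he₀.2]⟩, rfl⟩
        have hdist : dist θ ((e₀' - e : ℝ) : S1) = e := by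
          rw [← hθ0]
          show dist ((e₀' : ℝ) : S1) _ = e
          rw [dist_coe_eq (by rw [abs_of_nonneg (by linarith)]; linarith)]
          rw [abs_of_nonneg (by linarith)]; ring
        have := hθmem θ hθ _ hmem
        rw [hdist] at this
        linarith
      have hmemSM : e₀' - e₁' ∈ SM := by
        refine ⟨⟨by linarith, hle⟩, fun s hs => ?_⟩
        have hshift : ((s : ℝ) : S1) = ((e₀' + (s - t₀) : ℝ) : S1) := by
          have h1 : ((t₀ : ℝ) : S1) = ((e₀' : ℝ) : S1) := by rw [ht₀, ← hθ0]
          have := S1.coe_shift h1 (s - t₀)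
          rw [show t₀ + (s - t₀) = s by ring] at this
          exact this
        intro θ' hθ'
        rw [hshift]
        exact hθmem θ' hθ' _ ⟨e₀' + (s - t₀),
          ⟨by linarith [he₁.1, hs.1], by linarith [he₀.2, hs.2]⟩, rfl⟩
      have hup : e₀' - e₁' ≤ uM := le_csSup hSMbdd hmemSM
      apply hwA
      have hshift : ((e₁' : ℝ) : S1) = ((t₀ - (e₀' - e₁') : ℝ) : S1) := by
        have h1 : ((e₀' : ℝ) : S1) = ((t₀ : ℝ) : S1) := by rw [ht₀]; exact hθ0
        have := S1.coe_shift h1 (e₁' - e₀')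
        rw [show e₀' + (e₁' - e₀') = e₁' by ring,
          show t₀ + (e₁' - e₀') = t₀ - (e₀' - e₁') by ring] at this
        exact this
      rw [← hw1]
      show ((e₁' : ℝ) : S1) ∈ _
      rw [hshift]
      exact coe_mem_arcIm ⟨by linarith, by linarith⟩

section MeasureLemmas

/-- The support of a finitely supported measure is contained in any full-measure finite set. -/
lemma suppSet_subset_finset (ν : Pfin S1) {S : Finset S1} (hS : ν.1 (↑S : Set S1) = 1) :
    suppSet ν.1 ⊆ (↑S : Set S1) := by
  intro x hx
  by_contra hxS
  apply hx
  rw [ProbabilityMeasure.null_iff_toMeasure_null]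
  have hSc : ν.1.toMeasure (↑S : Set S1)ᶜ = 0 := by
    have h1 : ν.1.toMeasure (↑S : Set S1) = 1 := by
      rw [← ProbabilityMeasure.ennreal_coeFn_eq_coeFn_toMeasure, hS]; simp
    have h2 := measure_compl (S.measurableSet) (by simp : ν.1.toMeasure (↑S : Set S1) ≠ ⊤)
    rw [h1] at h2
    simpa using h2
  exact measure_mono_null (by simpa using hxS) hSc

lemma suppSet_finite (ν : Pfin S1) : (suppSet ν.1).Finite := by
  obtain ⟨S, hS⟩ := ν.2
  exact (S.finite_toSet).subset (suppSet_subset_finset ν hS)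

/-- The complement of the support is null. -/
lemma compl_suppSet_null (ν : Pfin S1) : ν.1.toMeasure (suppSet ν.1)ᶜ = 0 := by
  obtain ⟨S, hS⟩ := ν.2
  have hSc : ν.1.toMeasure (↑S : Set S1)ᶜ = 0 := by
    have h1 : ν.1.toMeasure (↑S : Set S1) = 1 := by
      rw [← ProbabilityMeasure.ennreal_coeFn_eq_coeFn_toMeasure, hS]; simp
    have h2 := measure_compl (S.measurableSet) (by simp : ν.1.toMeasure (↑S : Set S1) ≠ ⊤)
    rw [h1] at h2
    simpa using h2
  have hsub : (suppSet ν.1)ᶜ ⊆ ((↑S : Set S1) \ suppSet ν.1) ∪ (↑S : Set S1)ᶜ := by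
    intro x hx
    by_cases h : x ∈ (↑S : Set S1)
    · exact Or.inl ⟨h, hx⟩
    · exact Or.inr h
  refine measure_mono_null hsub (measure_union_null ?_ hSc)
  have : ((↑S : Set S1) \ suppSet ν.1) ⊆ ⋃ x ∈ (S.filter (fun x => ν.1 {x} = 0)), {x} := by
    intro x hx
    simp only [Set.mem_iUnion]
    refine ⟨x, ?_, rfl⟩
    simp only [Finset.mem_filter]
    exact ⟨by simpa using hx.1, by simpa [suppSet] using hx.2⟩
  refine measure_mono_null this ((measure_biUnion_null_iff (Finset.countable_toSet _)).2 ?_)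
  intro x hx
  rw [← ProbabilityMeasure.null_iff_toMeasure_null]
  exact (Finset.mem_filter.1 hx).2

/-- Measures agree with their restriction to the support. -/
lemma apply_eq_inter_supp (ν : Pfin S1) (E : Set S1) :
    ν.1.toMeasure E = ν.1.toMeasure (E ∩ suppSet ν.1) := by
  refine le_antisymm ?_ (measure_mono Set.inter_subset_left)
  calc ν.1.toMeasure E ≤ ν.1.toMeasure (E ∩ suppSet ν.1) + ν.1.toMeasure (E \ suppSet ν.1) :=
        measure_le_inter_add_diff _ _ _
    _ = ν.1.toMeasure (E ∩ suppSet ν.1) := by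
        rw [measure_mono_null (fun x hx => hx.2 : E \ suppSet ν.1 ⊆ (suppSet ν.1)ᶜ)
          (compl_suppSet_null ν), add_zero]

lemma suppSet_nonempty (ν : Pfin S1) : (suppSet ν.1).Nonempty := by
  by_contra h
  rw [Set.not_nonempty_iff_eq_empty] at h
  have h2 := apply_eq_inter_supp ν Set.univ
  rw [h] at h2
  simp only [Set.inter_empty, measure_empty] at h2
  have h1 : ν.1.toMeasure Set.univ = 1 := by simp
  rw [h2] at h1
  exact zero_ne_one h1

end MeasureLemmas

lemma coe_apply_eq_toReal (ξ : Pfin S1) (E : Set S1) :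
    ((ξ.1 E : ℝ≥0) : ℝ) = (ξ.1.toMeasure E).toReal := by
  rw [← ENNReal.coe_toReal, ProbabilityMeasure.ennreal_coeFn_eq_coeFn_toMeasure]


set_option maxHeartbeats 2000000 in
/-- Let `r ∈ [0,π)`, `k ≥ 0`, and `μ ∈ V_{2k+1}(r)`. For every `ε > 0`
and every `ν` in a sufficiently small neighborhood of `μ` in `VRm(S¹;r)`: if
`A_0, …, A_{2l}` are all the `(ν,r)`-arcs and each `A'_i` extends `A_i` by `(π−r)/2` at
both ends, then `ν(A'_i) = ν(A_i)`, the `A'_i` are pairwise disjoint, `supp μ ⊆ ⋃ᵢ A'_i`,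
and `|μ(A'_i) − ν(A'_i)| < ε` for every `i`. -/
theorem extended_arc_masses_close (r : ℝ) (hr0 : 0 ≤ r) (hrπ : r < Real.pi) (k : ℕ)
    (μ : Pfin S1) (hμ : μ ∈ V r k) (ε : ℝ) (hε : 0 < ε) :
    ∀ᶠ ν in nhdsWithin μ (VRm r),
      ∀ (l : ℕ) (A A' : Fin (2 * l + 1) → Set S1),
        Function.Injective A → (∀ i, IsArc r (suppSet ν.1) (A i)) →
        (∀ B : Set S1, IsArc r (suppSet ν.1) B → ∃ i, B = A i) →
        (∀ i, IsExtensionBy ((Real.pi - r) / 2) (A i) (A' i)) →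
        (∀ i, ν.1 (A' i) = ν.1 (A i)) ∧
        (∀ i j, i ≠ j → Disjoint (A' i) (A' j)) ∧
        suppSet μ.1 ⊆ ⋃ i, A' i ∧
        (∀ i, |(μ.1 (A' i) : ℝ) - (ν.1 (A' i) : ℝ)| < ε) := by
  classical
  have hπ := Real.pi_pos
  set c := (Real.pi - r) / 2 with hcdef
  have hc0 : 0 < c := by rw [hcdef]; linarith
  -- support of μ
  set F := (suppSet_finite μ).toFinset with hFdef
  have hFcoe : (↑F : Set S1) = suppSet μ.1 := (suppSet_finite μ).coe_toFinset
  have hFne : F.Nonempty := by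
    obtain ⟨x, hx⟩ := suppSet_nonempty μ
    exact ⟨x, by rw [← Finset.mem_coe, hFcoe]; exact hx⟩
  set M := F.card with hMdef
  have hM1 : 1 ≤ M := Finset.card_pos.2 hFne
  -- minimum mass
  set mmin : ℝ := F.inf' hFne (fun x => ((μ.1 {x} : ℝ≥0) : ℝ)) with hmmindef
  have hmmin_pos : 0 < mmin := by
    rw [hmmindef, Finset.lt_inf'_iff]
    intro x hx
    have hx' : x ∈ suppSet μ.1 := by rw [← hFcoe]; exact hx
    have : μ.1 {x} ≠ 0 := hx'
    positivity
  have hmmin_le : ∀ x ∈ F, mmin ≤ ((μ.1 {x} : ℝ≥0) : ℝ) := fun x hx =>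
    Finset.inf'_le _ hx
  -- separation radius δ₀
  obtain ⟨δ₀, hδ₀0, hδ₀c, hδ₀sep⟩ :
      ∃ δ₀ > 0, δ₀ ≤ c ∧ ∀ x ∈ F, ∀ y ∈ F, x ≠ y → 2 * δ₀ < dist x y := by
    rcases Finset.eq_empty_or_nonempty F.offDiag with hOD | hOD
    · refine ⟨c, hc0, le_rfl, fun x hx y hy hxy => ?_⟩
      exfalso
      have : (x, y) ∈ F.offDiag := Finset.mem_offDiag.2 ⟨hx, hy, hxy⟩
      rw [hOD] at this
      exact absurd this (Finset.notMem_empty _)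
    · set g := F.offDiag.inf' hOD (fun p => dist p.1 p.2) with hgdef
      have hg0 : 0 < g := by
        rw [hgdef, Finset.lt_inf'_iff]
        rintro ⟨x, y⟩ hxy
        rw [Finset.mem_offDiag] at hxy
        exact dist_pos.2 fun h => hxy.2.2 h
      refine ⟨min c (g / 3), lt_min hc0 (by linarith), min_le_left _ _, fun x hx y hy hxy => ?_⟩
      have h1 : g ≤ dist x y := Finset.inf'_le (fun p => dist p.1 p.2)
        (show (x, y) ∈ F.offDiag from Finset.mem_offDiag.2 ⟨hx, hy, hxy⟩)
      have h2 : min c (g / 3) ≤ g / 3 := min_le_right _ _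
      linarith
  -- choose δ avoiding the distance set
  set Dbad : Set ℝ := (fun p : S1 × S1 => dist p.1 p.2) '' ((↑F : Set S1) ×ˢ (↑F : Set S1))
    with hDdef
  have hDfin : Dbad.Finite := ((F.finite_toSet.prod F.finite_toSet).image _)
  obtain ⟨δ, hδmem, hδD⟩ : ∃ δ, δ ∈ Set.Ioo 0 δ₀ ∧ δ ∉ Dbad := by
    obtain ⟨δ, hδ⟩ := ((Set.Ioo_infinite hδ₀0).diff hDfin).nonempty
    exact ⟨δ, hδ.1, hδ.2⟩
  have hδ0 : 0 < δ := hδmem.1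
  have hδδ₀ : δ < δ₀ := hδmem.2
  have hδc : δ ≤ c := le_of_lt (lt_of_lt_of_le hδδ₀ hδ₀c)
  -- null frontier of the balls
  have hfr : ∀ x ∈ F, μ.1 (frontier (ball x δ)) = 0 := by
    intro x hx
    rw [ProbabilityMeasure.null_iff_toMeasure_null]
    refine measure_mono_null frontier_ball_subset_sphere ?_
    rw [apply_eq_inter_supp μ (sphere x δ)]
    have : sphere x δ ∩ suppSet μ.1 = ∅ := by
      ext y
      simp only [Set.mem_inter_iff, Set.mem_empty_iff_false, iff_false, not_and]
      intro hy hysupp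
      apply hδD
      rw [hDdef]
      refine ⟨(x, y), ⟨hx, by rw [Finset.mem_coe, ← Finset.mem_coe, hFcoe]; exact hysupp⟩, ?_⟩
      simp only
      rw [dist_comm]
      exact hy
    rw [this]
    simp
  -- the small mass error
  set ε' : ℝ := min (ε / (↑M + 1)) mmin / 2 with hε'def
  have hMε : (M : ℝ) * ε' < ε := by
    have h1 : ε' ≤ ε / (↑M + 1) / 2 := by
      rw [hε'def]
      have := min_le_left (ε / (↑M + 1)) mmin
      linarith
    have hM0 : (0 : ℝ) < ↑M + 1 := by positivity
    have h2 : (M : ℝ) * (ε / (↑M + 1) / 2) < ε := by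
      have hMr : (0 : ℝ) ≤ (M : ℝ) := Nat.cast_nonneg _
      rw [div_div, mul_comm, div_mul_eq_mul_div, div_lt_iff₀ (by positivity)]
      nlinarith
    have hε'0 : 0 < ε' := by
      rw [hε'def]
      have := hmmin_pos
      have : 0 < min (ε / (↑M + 1)) mmin := lt_min (by positivity) hmmin_pos
      linarith
    calc (M : ℝ) * ε' ≤ (M : ℝ) * (ε / (↑M + 1) / 2) := by
          apply mul_le_mul_of_nonneg_left h1 (by positivity)
      _ < ε := h2
  have hε'0 : 0 < ε' := by
    rw [hε'def]
    have : 0 < min (ε / (↑M + 1)) mmin := lt_min (by positivity) hmmin_pos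
    linarith
  have hε'mmin : ε' < mmin := by
    rw [hε'def]
    have := min_le_right (ε / (↑M + 1)) mmin
    linarith
  -- eventual closeness of ball masses
  have hsubt : Filter.Tendsto (fun ν : Pfin S1 => ν.1) (nhdsWithin μ (VRm r)) (nhds μ.1) :=
    (continuous_subtype_val.tendsto μ).mono_left nhdsWithin_le_nhds
  have hev2 : ∀ᶠ ν in nhdsWithin μ (VRm r), ∀ x ∈ F,
      |((ν.1 (ball x δ) : ℝ≥0) : ℝ) - ((μ.1 (ball x δ) : ℝ≥0) : ℝ)| < ε' := by
    rw [Filter.eventually_all_finset]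
    intro x hx
    have key := MeasureTheory.ProbabilityMeasure.tendsto_measure_of_null_frontier_of_tendsto
      hsubt (hfr x hx)
    have hreal : Filter.Tendsto (fun ν : Pfin S1 => ((ν.1 (ball x δ) : ℝ≥0) : ℝ))
        (nhdsWithin μ (VRm r)) (nhds ((μ.1 (ball x δ) : ℝ≥0) : ℝ)) :=
      (NNReal.tendsto_coe).2 key
    have := Metric.tendsto_nhds.1 hreal ε' hε'0
    filter_upwards [this] with ν hν
    rwa [Real.dist_eq] at hν
  filter_upwards [eventually_mem_nhdsWithin, hev2] with ν hνVR hνballs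
  intro l A A' hinj harcs henum hext
  -- representations
  choose a b hab hb2 hAeq hA'eq using hext
  have hAeq' : ∀ i, A i = arcIm (a i) (b i) := hAeq
  have hA'eq' : ∀ i, A' i = arcIm (a i - c) (b i + c) := hA'eq
  set Θν := suppSet ν.1 with hΘdef
  have hdiam : ∀ θ ∈ Θν, ∀ θ' ∈ Θν, dist θ θ' ≤ r := by
    intro θ hθ θ' hθ'
    exact le_trans (dist_le_diam_of_mem ((isCompact_univ.isBounded).subset
      (Set.subset_univ _)) hθ hθ') hνVR
  have hcov : ∀ y ∈ Θν, ∃ i, y ∈ A i := by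
    intro y hy
    obtain ⟨B, hB, hyB⟩ := exists_arc_mem hr0 hrπ hdiam hy
    obtain ⟨i, hi⟩ := henum B hB
    exact ⟨i, hi ▸ hyB⟩
  have hAsub : ∀ i, A i ⊆ A' i := by
    intro i
    rw [hAeq' i, hA'eq' i]
    exact Set.image_mono (Set.Icc_subset_Icc (by linarith) (by linarith))
  have hdisj : ∀ i j, i ≠ j → Disjoint (A' i) (A' j) := by
    intro i j hij
    rw [hA'eq' i, hA'eq' j]
    have hne : arcIm (a i) (b i) ≠ arcIm (a j) (b j) := by
      rw [← hAeq' i, ← hAeq' j]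
      exact fun h => hij (hinj h)
    exact ext_disjoint hr0 hrπ (hab i) (hb2 i) (hab j) (hb2 j)
      (hAeq' i ▸ harcs i) (hAeq' j ▸ harcs j) hne
  have hnear : ∀ y ∈ Θν, ∀ x : S1, dist x y < δ → ∀ i, y ∈ A i → x ∈ A' i := by
    intro y hy x hdxy i hyA
    rw [hAeq' i] at hyA
    obtain ⟨s, hs, hseq⟩ := mem_arcIm.1 hyA
    obtain ⟨q, hq, hqπ, hqd⟩ := exists_lift x s
    rw [hseq] at hqd
    have habs : |q - s| < δ := hqd ▸ hdxy
    have h1 := abs_lt.1 habs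
    rw [hA'eq' i, ← hq]
    exact coe_mem_arcIm ⟨by linarith [hs.1], by linarith [hs.2]⟩
  have hsupp_sub : ∀ i, ∀ y ∈ Θν, y ∈ A' i → y ∈ A i := by
    intro i y hy hyA'
    obtain ⟨j, hj⟩ := hcov y hy
    rcases eq_or_ne j i with h | h
    · exact h ▸ hj
    · exfalso
      exact Set.disjoint_left.1 (hdisj j i h) (hAsub j hj) hyA'
  -- conclusion 1
  have hconc1 : ∀ i, ν.1 (A' i) = ν.1 (A i) := by
    intro i
    have hmeq : ν.1.toMeasure (A' i) = ν.1.toMeasure (A i) := by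
      refine le_antisymm ?_ (measure_mono (hAsub i))
      rw [apply_eq_inter_supp ν (A' i)]
      exact measure_mono fun y hy => hsupp_sub i y hy.2 hy.1
    simp only [ProbabilityMeasure.coeFn_def]
    exact congrArg ENNReal.toNNReal hmeq
  -- conclusion 3 preparation: each supp μ point lies in some extended arc
  have hcov' : ∀ x ∈ F, ∃ i, x ∈ A' i ∧ ball x δ ∩ Θν ⊆ A i := by
    intro x hx
    -- positive ν-mass near x
    have hball : ((ν.1 (ball x δ) : ℝ≥0) : ℝ) > 0 := by
      have h1 := hνballs x hx
      have h2 : ((μ.1 (ball x δ) : ℝ≥0) : ℝ) ≥ ((μ.1 {x} : ℝ≥0) : ℝ) := by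
        exact_mod_cast μ.1.apply_mono (Set.singleton_subset_iff.2 (mem_ball_self hδ0))
      have h3 := hmmin_le x hx
      have h4 := abs_lt.1 h1
      linarith
    have hne : (ball x δ ∩ Θν).Nonempty := by
      by_contra h
      rw [Set.not_nonempty_iff_eq_empty] at h
      have : ν.1.toMeasure (ball x δ) = 0 := by
        rw [apply_eq_inter_supp ν (ball x δ), ← hΘdef, h]
        simp
      rw [coe_apply_eq_toReal] at hball
      rw [this] at hball
      simp at hball
    obtain ⟨y, hy⟩ := hne
    obtain ⟨i, hi⟩ := hcov y hy.2
    have hxy : dist x y < δ := by rw [dist_comm]; exact mem_ball.1 hy.1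
    refine ⟨i, hnear y hy.2 x hxy i hi, ?_⟩
    intro z hz
    obtain ⟨j, hj⟩ := hcov z hz.2
    have hxz : dist x z < δ := by rw [dist_comm]; exact mem_ball.1 hz.1
    have hxA'j : x ∈ A' j := hnear z hz.2 x hxz j hj
    have hxA'i : x ∈ A' i := hnear y hy.2 x hxy i hi
    rcases eq_or_ne j i with h | h
    · exact h ▸ hj
    · exact absurd hxA'i (Set.disjoint_left.1 (hdisj j i h) hxA'j)
  have hconc3 : suppSet μ.1 ⊆ ⋃ i, A' i := by
    intro x hx
    obtain ⟨i, hi, _⟩ := hcov' x (by rw [← Finset.mem_coe, hFcoe]; exact hx)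
    exact Set.mem_iUnion.2 ⟨i, hi⟩
  refine ⟨hconc1, hdisj, hconc3, ?_⟩
  -- conclusion 4
  have hA'meas : ∀ i, MeasurableSet (A' i) := by
    intro i
    rw [hA'eq' i]
    exact (isClosed_arcIm _ _).measurableSet
  set J : Fin (2 * l + 1) → Finset S1 := fun i => F.filter (fun x => x ∈ A' i) with hJdef
  have hJdisj : ∀ i j, i ≠ j → Disjoint (J i) (J j) := by
    intro i j hij
    rw [Finset.disjoint_left]
    intro x hxi hxj
    rw [hJdef, Finset.mem_filter] at hxi hxj
    exact Set.disjoint_left.1 (hdisj i j hij) hxi.2 hxj.2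
  have hμsum : ∀ i, ((μ.1 (A' i) : ℝ≥0) : ℝ) = ∑ x ∈ J i, ((μ.1 {x} : ℝ≥0) : ℝ) := by
    intro i
    rw [coe_apply_eq_toReal]
    have h1 : μ.1.toMeasure (A' i) = μ.1.toMeasure (↑(J i) : Set S1) := by
      rw [apply_eq_inter_supp μ (A' i)]
      congr 1
      ext x
      simp only [hJdef, Finset.coe_filter, Set.mem_setOf_eq, Set.mem_inter_iff, Finset.mem_coe]
      rw [← Finset.mem_coe, hFcoe]
      tauto
    rw [h1]
    have h2 : (↑(J i) : Set S1) = ⋃ x ∈ J i, {x} := by ext y; simp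
    rw [h2, measure_biUnion_finset ?_ (fun x _ => measurableSet_singleton x)]
    · rw [ENNReal.toReal_sum (fun x _ => measure_ne_top _ _)]
      refine Finset.sum_congr rfl fun x _ => ?_
      rw [coe_apply_eq_toReal]
    · intro x hx y hy hxy
      simp only [Set.disjoint_singleton_left, Set.mem_singleton_iff]
      exact hxy
  have hνlow : ∀ i, ∑ x ∈ J i, (((μ.1 {x} : ℝ≥0) : ℝ) - ε') ≤ ((ν.1 (A' i) : ℝ≥0) : ℝ) := by
    intro i
    have hballs_sub : ∀ x ∈ J i, ν.1.toMeasure (ball x δ) ≤ ν.1.toMeasure (ball x δ ∩ A' i) := by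
      intro x hx
      rw [hJdef, Finset.mem_filter] at hx
      obtain ⟨ix, hix, hsub⟩ := hcov' x hx.1
      have hix_eq : ix = i := by
        rcases eq_or_ne ix i with h | h
        · exact h
        · exact absurd hx.2 (Set.disjoint_left.1 (hdisj ix i h) hix)
      rw [apply_eq_inter_supp ν (ball x δ)]
      refine measure_mono fun z hz => ⟨hz.1, ?_⟩
      exact hAsub i (hix_eq ▸ hsub ⟨hz.1, hz.2⟩)
    have hdisjballs : ∀ x ∈ J i, ∀ y ∈ J i, x ≠ y →
        Disjoint (ball x δ ∩ A' i) (ball y δ ∩ A' i) := by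
      intro x hx y hy hxy
      have hxF : x ∈ F := (Finset.mem_filter.1 hx).1
      have hyF : y ∈ F := (Finset.mem_filter.1 hy).1
      have := hδ₀sep x hxF y hyF hxy
      exact ((ball_disjoint_ball (by linarith)).mono Set.inter_subset_left
        Set.inter_subset_left)
    have hsum : ν.1.toMeasure (⋃ x ∈ J i, (ball x δ ∩ A' i)) =
        ∑ x ∈ J i, ν.1.toMeasure (ball x δ ∩ A' i) :=
      measure_biUnion_finset hdisjballs
        (fun x _ => measurableSet_ball.inter (hA'meas i))
    have hUsub : (⋃ x ∈ J i, (ball x δ ∩ A' i)) ⊆ A' i := by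
      intro z hz
      obtain ⟨x, _, hz⟩ := Set.mem_iUnion₂.1 hz
      exact hz.2
    have hle1 : ∑ x ∈ J i, ν.1.toMeasure (ball x δ ∩ A' i) ≤ ν.1.toMeasure (A' i) := by
      rw [← hsum]
      exact measure_mono hUsub
    have hreal : ∑ x ∈ J i, ((ν.1 (ball x δ ∩ A' i) : ℝ≥0) : ℝ) ≤ ((ν.1 (A' i) : ℝ≥0) : ℝ) := by
      rw [coe_apply_eq_toReal]
      calc ∑ x ∈ J i, ((ν.1 (ball x δ ∩ A' i) : ℝ≥0) : ℝ)
          = (∑ x ∈ J i, ν.1.toMeasure (ball x δ ∩ A' i)).toReal := by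
            rw [ENNReal.toReal_sum (fun x _ => measure_ne_top _ _)]
            exact Finset.sum_congr rfl fun x _ => coe_apply_eq_toReal ν _
        _ ≤ (ν.1.toMeasure (A' i)).toReal :=
            ENNReal.toReal_mono (measure_ne_top _ _) hle1
    refine le_trans (Finset.sum_le_sum fun x hx => ?_) hreal
    -- per-ball bound
    have h1 := hνballs x (Finset.mem_filter.1 hx).1
    have h2 : ((μ.1 (ball x δ) : ℝ≥0) : ℝ) ≥ ((μ.1 {x} : ℝ≥0) : ℝ) := by
      exact_mod_cast μ.1.apply_mono (Set.singleton_subset_iff.2 (mem_ball_self hδ0))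
    have h3 : ((ν.1 (ball x δ) : ℝ≥0) : ℝ) ≤ ((ν.1 (ball x δ ∩ A' i) : ℝ≥0) : ℝ) := by
      rw [coe_apply_eq_toReal, coe_apply_eq_toReal]
      exact ENNReal.toReal_mono (measure_ne_top _ _) (hballs_sub x hx)
    have h4 := abs_lt.1 h1
    linarith
  -- total masses are 1
  have hsumν : ∑ i, ((ν.1 (A' i) : ℝ≥0) : ℝ) = 1 := by
    have hcovA' : Θν ⊆ ⋃ i, A' i := by
      intro y hy
      obtain ⟨i, hi⟩ := hcov y hy
      exact Set.mem_iUnion.2 ⟨i, hAsub i hi⟩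
    have h1 : ν.1.toMeasure (⋃ i, A' i) = 1 := by
      refine le_antisymm (le_trans (measure_mono (Set.subset_univ _)) (by simp)) ?_
      have h2 : ν.1.toMeasure Set.univ = ν.1.toMeasure (Set.univ ∩ Θν) :=
        apply_eq_inter_supp ν _
      calc (1 : ℝ≥0∞) = ν.1.toMeasure Set.univ := by simp
        _ = ν.1.toMeasure (Set.univ ∩ Θν) := h2
        _ ≤ ν.1.toMeasure (⋃ i, A' i) := measure_mono fun y hy => hcovA' hy.2
    have h3 : ν.1.toMeasure (⋃ i, A' i) = ∑ i, ν.1.toMeasure (A' i) := by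
      rw [measure_iUnion (fun i j hij => hdisj i j hij) hA'meas]
      exact tsum_fintype _
    have h4 : (∑ i, ν.1.toMeasure (A' i)).toReal = 1 := by rw [← h3, h1]; simp
    rw [ENNReal.toReal_sum (fun i _ => measure_ne_top _ _)] at h4
    rw [← h4]
    exact Finset.sum_congr rfl fun i _ => coe_apply_eq_toReal ν _
  have hsumμ : ∑ i, ((μ.1 (A' i) : ℝ≥0) : ℝ) = 1 := by
    have h1 : μ.1.toMeasure (⋃ i, A' i) = 1 := by
      refine le_antisymm (le_trans (measure_mono (Set.subset_univ _)) (by simp)) ?_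
      have h2 : μ.1.toMeasure Set.univ = μ.1.toMeasure (Set.univ ∩ suppSet μ.1) :=
        apply_eq_inter_supp μ _
      calc (1 : ℝ≥0∞) = μ.1.toMeasure Set.univ := by simp
        _ = μ.1.toMeasure (Set.univ ∩ suppSet μ.1) := h2
        _ ≤ μ.1.toMeasure (⋃ i, A' i) := measure_mono fun y hy => hconc3 hy.2
    have h3 : μ.1.toMeasure (⋃ i, A' i) = ∑ i, μ.1.toMeasure (A' i) := by
      rw [measure_iUnion (fun i j hij => hdisj i j hij) hA'meas]
      exact tsum_fintype _
    have h4 : (∑ i, μ.1.toMeasure (A' i)).toReal = 1 := by rw [← h3, h1]; simp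
    rw [ENNReal.toReal_sum (fun i _ => measure_ne_top _ _)] at h4
    rw [← h4]
    exact Finset.sum_congr rfl fun i _ => coe_apply_eq_toReal μ _
  -- cardinality bound
  have hcard : ∑ i, (J i).card ≤ M := by
    rw [← Finset.card_biUnion (fun i _ => fun j _ hij => hJdisj i j hij)]
    apply Finset.card_le_card
    intro x hx
    obtain ⟨i, _, hi⟩ := Finset.mem_biUnion.1 hx
    exact (Finset.mem_filter.1 hi).1
  -- per-i deficiency bound
  have hdef : ∀ i, ((μ.1 (A' i) : ℝ≥0) : ℝ) - ((ν.1 (A' i) : ℝ≥0) : ℝ) ≤ (J i).card * ε' := by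
    intro i
    have h1 := hνlow i
    have h2 := hμsum i
    have h3 : ∑ x ∈ J i, (((μ.1 {x} : ℝ≥0) : ℝ) - ε') =
        (∑ x ∈ J i, ((μ.1 {x} : ℝ≥0) : ℝ)) - (J i).card * ε' := by
      rw [Finset.sum_sub_distrib]
      simp [Finset.sum_const, nsmul_eq_mul]
    rw [h3, ← h2] at h1
    linarith
  intro i
  rw [abs_sub_lt_iff]
  constructor
  · -- μ - ν < ε
    calc ((μ.1 (A' i) : ℝ≥0) : ℝ) - ((ν.1 (A' i) : ℝ≥0) : ℝ) ≤ (J i).card * ε' := hdef i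
      _ ≤ (M : ℝ) * ε' := by
          apply mul_le_mul_of_nonneg_right _ (le_of_lt hε'0)
          exact_mod_cast le_trans (Finset.single_le_sum
            (fun j _ => Nat.zero_le _) (Finset.mem_univ i)) hcard
      _ < ε := hMε
  · -- ν - μ < ε
    have h1 : ((ν.1 (A' i) : ℝ≥0) : ℝ) - ((μ.1 (A' i) : ℝ≥0) : ℝ) =
        ∑ j ∈ Finset.univ.erase i, (((μ.1 (A' j) : ℝ≥0) : ℝ) - ((ν.1 (A' j) : ℝ≥0) : ℝ)) := by
      have h2 : ∑ j, (((μ.1 (A' j) : ℝ≥0) : ℝ) - ((ν.1 (A' j) : ℝ≥0) : ℝ)) = 0 := by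
        rw [Finset.sum_sub_distrib, hsumμ, hsumν]; ring
      rw [← Finset.add_sum_erase _ _ (Finset.mem_univ i)] at h2
      linarith
    rw [h1]
    calc ∑ j ∈ Finset.univ.erase i, (((μ.1 (A' j) : ℝ≥0) : ℝ) - ((ν.1 (A' j) : ℝ≥0) : ℝ))
        ≤ ∑ j ∈ Finset.univ.erase i, ((J j).card : ℝ) * ε' :=
          Finset.sum_le_sum fun j _ => hdef j
      _ ≤ ∑ j, ((J j).card : ℝ) * ε' := by
          apply Finset.sum_le_sum_of_subset_of_nonneg (Finset.erase_subset _ _)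
          intro j _ _
          positivity
      _ ≤ (M : ℝ) * ε' := by
          rw [← Finset.sum_mul]
          apply mul_le_mul_of_nonneg_right _ (le_of_lt hε'0)
          exact_mod_cast hcard
      _ < ε := hMε
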